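/- Let μ_k, μ be finite measures on ℝ³, H_k ∈ L²(μ_k; ℝ³) with sup_k ‖H_k‖_{L²(μ_k)} < ∞ and (μ_k, H_k) ⇀ (μ, H) weakly as measure-function pairs in L², and let b_k, b be μ_k- resp. μ-measurable functions with 0 < c ≤ b_k, b ≤ C and (μ_k, √b_k) → (μ, √b) strongly as measure-function pairs in L². Then ∫ b |H|² dμ ≤ liminf_k ∫ b_k |H_k|² dμ_k. -/

import Mathlib

open MeasureTheory Filter CompactlySupported

open Metric
open scoped ENNReal

local notation "E3" => EuclideanSpace ℝ (Fin 3)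

namespace Stmt18Aux

noncomputable section


theorem amgm (s χ t a p u : ℝ) (ht : 0 < t) (ha : 0 ≤ a) (hp : 0 ≤ p) (hu : |u| ≤ a * p) :
    |2 * ((s - χ) * u)| ≤ t * ((s - χ)^2 * p^2) + a^2 / t := by
  have habs : |2 * ((s - χ) * u)| ≤ 2 * (|s - χ| * (a * p)) := by
    rw [abs_mul, abs_mul, abs_two]
    gcongr
  refine habs.trans ?_
  set q := |s - χ| with hqdef
  have hq0 : 0 ≤ q := abs_nonneg _
  have hqsq : q^2 = (s - χ)^2 := sq_abs _
  have hinv : 0 < t⁻¹ := inv_pos.2 ht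
  have h2 : a^2 / t = a^2 * t⁻¹ := div_eq_mul_inv _ _
  have e1 : t^2 * q^2 * p^2 * t⁻¹ = t * (q^2 * p^2) := by field_simp
  have e2 : t * q * p * a * t⁻¹ = q * p * a := by field_simp
  rw [← hqsq, h2]
  nlinarith [mul_nonneg (sq_nonneg (t * q * p - a)) hinv.le, e1, e2,
    mul_nonneg (mul_nonneg hq0 hp) ha]

theorem cauchy_pt (s a p u : ℝ) (hs : 0 ≤ s) (hu : |u| ≤ a * p) :
    2 * (s * u) ≤ s^2 * a^2 + p^2 := by
  rw [abs_le] at hu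
  nlinarith [sq_nonneg (s * a - p), sq_nonneg (s * a + p)]

variable {ν : Measure E3} [IsFiniteMeasure ν]

theorem integrable_normsq {h : E3 → E3} (hh : MemLp h 2 ν) :
    Integrable (fun x => ‖h x‖^2) ν := by
  have h2 := hh.integrable_norm_rpow two_ne_zero ENNReal.ofNat_ne_top
  have e : ((2:ℝ≥0∞)).toReal = ((2:ℕ):ℝ) := by norm_num
  rw [e] at h2
  simpa [Real.rpow_natCast] using h2

theorem integrable_mul_inner {h : E3 → E3} (hmeas : Measurable h) (hh : MemLp h 2 ν)
    {m : E3 → ℝ} (hm : Measurable m) {Mm : ℝ} (hMm : ∀ x, |m x| ≤ Mm)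
    {ψ : E3 → E3} (hψ : Continuous ψ) {M : ℝ} (hM : ∀ x, ‖ψ x‖ ≤ M) :
    Integrable (fun x => m x * (inner ℝ (h x) (ψ x) : ℝ)) ν := by
  have hint : Integrable (fun x => (Mm * M) * ‖h x‖) ν :=
    ((hh.integrable one_le_two).norm).const_mul _
  refine hint.mono' ?_ ?_
  · exact ((hm.mul (hmeas.inner hψ.measurable))).aestronglyMeasurable
  · filter_upwards with x
    have h1 : |(inner ℝ (h x) (ψ x) : ℝ)| ≤ ‖h x‖ * ‖ψ x‖ := abs_real_inner_le_norm _ _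
    have h2 : ‖h x‖ * ‖ψ x‖ ≤ ‖h x‖ * M := mul_le_mul_of_nonneg_left (hM x) (norm_nonneg _)
    have h0 : 0 ≤ Mm := le_trans (abs_nonneg _) (hMm x)
    calc ‖m x * (inner ℝ (h x) (ψ x) : ℝ)‖ = |m x| * |(inner ℝ (h x) (ψ x) : ℝ)| := by
          rw [Real.norm_eq_abs, abs_mul]
      _ ≤ Mm * (‖h x‖ * M) :=
          mul_le_mul (hMm x) (h1.trans h2) (abs_nonneg _) h0
      _ = Mm * M * ‖h x‖ := by ring

theorem integrable_wsq {g : E3 → ℝ} (hg : Measurable g) {Mg : ℝ} (hMg : ∀ x, |g x| ≤ Mg)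
    {φ : E3 → E3} (hφ : Continuous φ) (hφi : Integrable (fun x => ‖φ x‖^2) ν) :
    Integrable (fun x => (g x)^2 * ‖φ x‖^2) ν := by
  refine (hφi.const_mul (Mg^2)).mono' ?_ ?_
  · exact ((hg.pow_const 2).mul ((hφ.measurable.norm).pow_const 2)).aestronglyMeasurable
  · filter_upwards with x
    have e : ‖(g x)^2 * ‖φ x‖^2‖ = (g x)^2 * ‖φ x‖^2 := by
      rw [Real.norm_eq_abs]; exact abs_of_nonneg (by positivity)
    rw [e]
    have h2 : (g x)^2 ≤ Mg^2 := by
      have := abs_le.1 (hMg x); nlinarith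
    exact mul_le_mul_of_nonneg_right h2 (by positivity)

theorem integrable_weight_normsq {β : E3 → ℝ} (hβm : Measurable β) {Cb : ℝ}
    (hCb : ∀ x, |β x| ≤ Cb) {h : E3 → E3} (hmeas : Measurable h) (hh : MemLp h 2 ν) :
    Integrable (fun x => β x * ‖h x‖^2) ν := by
  refine ((integrable_normsq hh).const_mul Cb).mono' ?_ ?_
  · exact (hβm.mul ((hmeas.norm).pow_const 2)).aestronglyMeasurable
  · filter_upwards with x
    rw [Real.norm_eq_abs, abs_mul, abs_of_nonneg (by positivity : (0:ℝ) ≤ ‖h x‖^2)]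
    exact mul_le_mul_of_nonneg_right (hCb x) (by positivity)

theorem energy_lower {β : E3 → ℝ} (hβm : Measurable β) {c C : ℝ} (hc : 0 < c)
    (hβ : ∀ x, c ≤ β x ∧ β x ≤ C)
    {h : E3 → E3} (hm : Measurable h) (hh : MemLp h 2 ν)
    {φ : E3 → E3} (hφ : Continuous φ) {M : ℝ} (hM : ∀ x, ‖φ x‖ ≤ M)
    (hφi : Integrable (fun x => ‖φ x‖^2) ν) :
    2 * ∫ x, Real.sqrt (β x) * (inner ℝ (h x) (φ x) : ℝ) ∂ν ≤
      ∫ x, β x * ‖h x‖^2 ∂ν + ∫ x, ‖φ x‖^2 ∂ν := by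
  have habsβ : ∀ x, |β x| ≤ C := fun x =>
    (abs_of_nonneg (le_trans hc.le (hβ x).1)).le.trans (hβ x).2
  have hsqrtbd : ∀ x, |Real.sqrt (β x)| ≤ Real.sqrt C := fun x => by
    rw [abs_of_nonneg (Real.sqrt_nonneg _)]
    exact Real.sqrt_le_sqrt (hβ x).2
  have hint1 : Integrable (fun x => Real.sqrt (β x) * (inner ℝ (h x) (φ x) : ℝ)) ν :=
    integrable_mul_inner hm hh hβm.sqrt hsqrtbd hφ hM
  have hint0 : Integrable (fun x => β x * ‖h x‖^2) ν :=
    integrable_weight_normsq hβm habsβ hm hh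
  rw [← integral_const_mul, ← integral_add hint0 hφi]
  refine integral_mono (hint1.const_mul 2) (hint0.add hφi) fun x => ?_
  have hs : 0 ≤ Real.sqrt (β x) := Real.sqrt_nonneg _
  have hs2 : (Real.sqrt (β x))^2 = β x := Real.sq_sqrt (le_trans hc.le (hβ x).1)
  have hu : |(inner ℝ (h x) (φ x) : ℝ)| ≤ ‖h x‖ * ‖φ x‖ := abs_real_inner_le_norm _ _
  have hc2 := cauchy_pt (Real.sqrt (β x)) ‖h x‖ ‖φ x‖ _ hs hu
  rw [hs2] at hc2
  simpa using hc2

theorem inner_shift {β : E3 → ℝ} (hβm : Measurable β) {c C : ℝ} (hc : 0 < c)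
    (hβ : ∀ x, c ≤ β x ∧ β x ≤ C)
    {h : E3 → E3} (hm : Measurable h) (hh : MemLp h 2 ν)
    {φ : E3 → E3} (hφ : Continuous φ) {M : ℝ} (hM : ∀ x, ‖φ x‖ ≤ M)
    (hφi : Integrable (fun x => ‖φ x‖^2) ν)
    {χ : E3 → ℝ} (hχ : Continuous χ) {Mχ : ℝ} (hMχ : ∀ x, |χ x| ≤ Mχ)
    {t : ℝ} (ht : 0 < t) :
    |2 * ∫ x, Real.sqrt (β x) * (inner ℝ (h x) (φ x) : ℝ) ∂ν -
        2 * ∫ x, χ x * (inner ℝ (h x) (φ x) : ℝ) ∂ν| ≤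
      t * ∫ x, (Real.sqrt (β x) - χ x)^2 * ‖φ x‖^2 ∂ν +
        (1 / t) * ∫ x, ‖h x‖^2 ∂ν := by
  have hsqrtbd : ∀ x, |Real.sqrt (β x)| ≤ Real.sqrt C := fun x => by
    rw [abs_of_nonneg (Real.sqrt_nonneg _)]
    exact Real.sqrt_le_sqrt (hβ x).2
  have hint1 : Integrable (fun x => Real.sqrt (β x) * (inner ℝ (h x) (φ x) : ℝ)) ν :=
    integrable_mul_inner hm hh hβm.sqrt hsqrtbd hφ hM
  have hint2 : Integrable (fun x => χ x * (inner ℝ (h x) (φ x) : ℝ)) ν :=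
    integrable_mul_inner hm hh hχ.measurable hMχ hφ hM
  have hdiffbd : ∀ x, |Real.sqrt (β x) - χ x| ≤ Real.sqrt C + Mχ := fun x =>
    (abs_sub _ _).trans (add_le_add (hsqrtbd x) (hMχ x))
  have hGint : Integrable (fun x => (Real.sqrt (β x) - χ x)^2 * ‖φ x‖^2) ν :=
    integrable_wsq (hβm.sqrt.sub hχ.measurable) hdiffbd hφ hφi
  have hH2int : Integrable (fun x => ‖h x‖^2) ν := integrable_normsq hh
  have e0 : 2 * ∫ x, Real.sqrt (β x) * (inner ℝ (h x) (φ x) : ℝ) ∂ν -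
      2 * ∫ x, χ x * (inner ℝ (h x) (φ x) : ℝ) ∂ν =
      ∫ x, 2 * ((Real.sqrt (β x) - χ x) * (inner ℝ (h x) (φ x) : ℝ)) ∂ν := by
    rw [← integral_const_mul, ← integral_const_mul, ← integral_sub
      (hint1.const_mul 2) (hint2.const_mul 2)]
    congr 1; funext x; ring
  rw [e0]
  have habs : |∫ x, 2 * ((Real.sqrt (β x) - χ x) * (inner ℝ (h x) (φ x) : ℝ)) ∂ν| ≤
      ∫ x, |2 * ((Real.sqrt (β x) - χ x) * (inner ℝ (h x) (φ x) : ℝ))| ∂ν := by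
    have hni := norm_integral_le_integral_norm
        (μ := ν) (fun x => 2 * ((Real.sqrt (β x) - χ x) * (inner ℝ (h x) (φ x) : ℝ)))
    simp only [Real.norm_eq_abs] at hni
    exact hni
  refine habs.trans ?_
  have hintdiff : Integrable
      (fun x => 2 * ((Real.sqrt (β x) - χ x) * (inner ℝ (h x) (φ x) : ℝ))) ν := by
    have : (fun x => 2 * ((Real.sqrt (β x) - χ x) * (inner ℝ (h x) (φ x) : ℝ))) =
        fun x => 2 * (Real.sqrt (β x) * (inner ℝ (h x) (φ x) : ℝ)) -
          2 * (χ x * (inner ℝ (h x) (φ x) : ℝ)) := by funext x; ring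
    rw [this]
    exact (hint1.const_mul 2).sub (hint2.const_mul 2)
  have hmono : ∫ x, |2 * ((Real.sqrt (β x) - χ x) * (inner ℝ (h x) (φ x) : ℝ))| ∂ν ≤
      ∫ x, (t * ((Real.sqrt (β x) - χ x)^2 * ‖φ x‖^2) + ‖h x‖^2 / t) ∂ν := by
    refine integral_mono hintdiff.abs ((hGint.const_mul t).add (hH2int.div_const t))
      fun x => ?_
    exact amgm _ _ _ _ _ _ ht (norm_nonneg _) (norm_nonneg _) (abs_real_inner_le_norm _ _)
  refine hmono.trans (le_of_eq ?_)
  rw [integral_add (hGint.const_mul t) (hH2int.div_const t), integral_const_mul,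
    integral_div]
  ring

end
end Stmt18Aux


open Stmt18Aux

set_option maxHeartbeats 1000000


/-- lower semicontinuity of the weighted Willmore-type energy. If
`(μ_k, H_k) ⇀ (μ, H)` weakly as measure-function pairs in `L²` (weak-* convergence of
`μ_k` and of the vector measures `μ_k ⌐ H_k`, with uniform `L²` bounds) and
`(μ_k, √b_k) → (μ, √b)` strongly as measure-function pairs with `0 < c ≤ b_k, b ≤ C`,
then `∫ b ‖H‖² dμ ≤ liminf_k ∫ b_k ‖H_k‖² dμ_k`. -/
theorem stmt18
    (μ : ℕ → Measure (EuclideanSpace ℝ (Fin 3)))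
    (μ₀ : Measure (EuclideanSpace ℝ (Fin 3)))
    [∀ k, IsFiniteMeasure (μ k)] [IsFiniteMeasure μ₀]
    (H : ℕ → EuclideanSpace ℝ (Fin 3) → EuclideanSpace ℝ (Fin 3))
    (H₀ : EuclideanSpace ℝ (Fin 3) → EuclideanSpace ℝ (Fin 3))
    (b : ℕ → EuclideanSpace ℝ (Fin 3) → ℝ) (b₀ : EuclideanSpace ℝ (Fin 3) → ℝ)
    (hmeasH : ∀ k, Measurable (H k)) (hmeasH₀ : Measurable H₀)
    (hmeasb : ∀ k, Measurable (b k)) (hmeasb₀ : Measurable b₀)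
    (hH2 : ∀ k, MemLp (H k) 2 (μ k)) (hH₀2 : MemLp H₀ 2 μ₀)
    (C₀ : ℝ) (hL2bd : ∀ k, ∫ x, ‖H k x‖ ^ 2 ∂(μ k) ≤ C₀)
    (c C : ℝ) (hc : 0 < c)
    (hb : ∀ k x, c ≤ b k x ∧ b k x ≤ C) (hb₀ : ∀ x, c ≤ b₀ x ∧ b₀ x ≤ C)
    -- weak-* convergence of the measures
    (hμconv : ∀ φ : C_c(EuclideanSpace ℝ (Fin 3), ℝ),
      Tendsto (fun k => ∫ x, φ x ∂(μ k)) atTop (nhds (∫ x, φ x ∂μ₀)))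
    -- weak convergence of the vector measures μ_k ⌐ H_k
    (hHconv : ∀ φ : C_c(EuclideanSpace ℝ (Fin 3), EuclideanSpace ℝ (Fin 3)),
      Tendsto (fun k => ∫ x, (inner ℝ (H k x) (φ x) : ℝ) ∂(μ k)) atTop
        (nhds (∫ x, (inner ℝ (H₀ x) (φ x) : ℝ) ∂μ₀)))
    -- strong measure-function pair convergence of √b_k
    (hbconv : ∀ φ : C_c((EuclideanSpace ℝ (Fin 3)) × ℝ, ℝ),
      Tendsto (fun k => ∫ x, φ (x, Real.sqrt (b k x)) ∂(μ k)) atTop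
        (nhds (∫ x, φ (x, Real.sqrt (b₀ x)) ∂μ₀))) :
    ∫ x, b₀ x * ‖H₀ x‖ ^ 2 ∂μ₀ ≤
      liminf (fun k => ∫ x, b k x * ‖H k x‖ ^ 2 ∂(μ k)) atTop := by
  have hC₀0 : 0 ≤ C₀ :=
    le_trans (integral_nonneg (fun x => by positivity)) (hL2bd 0)
  have hcC : c ≤ C := le_trans (hb₀ 0).1 (hb₀ 0).2
  have hC : 0 < C := lt_of_lt_of_le hc hcC
  have habsb : ∀ k x, |b k x| ≤ C := fun k x =>
    (abs_of_nonneg (le_trans hc.le (hb k x).1)).le.trans (hb k x).2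
  have habsb₀ : ∀ x, |b₀ x| ≤ C := fun x =>
    (abs_of_nonneg (le_trans hc.le (hb₀ x).1)).le.trans (hb₀ x).2
  -- upper bound for the energies (for coboundedness of the liminf)
  have hub : ∀ k, ∫ x, b k x * ‖H k x‖ ^ 2 ∂(μ k) ≤ C * C₀ := by
    intro k
    have h1 : ∫ x, b k x * ‖H k x‖ ^ 2 ∂(μ k) ≤ ∫ x, C * ‖H k x‖ ^ 2 ∂(μ k) := by
      refine integral_mono (integrable_weight_normsq (hmeasb k) (habsb k)
        (hmeasH k) (hH2 k)) ((integrable_normsq (hH2 k)).const_mul C) fun x => ?_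
      exact mul_le_mul_of_nonneg_right (hb k x).2 (by positivity)
    rw [integral_const_mul] at h1
    exact h1.trans (mul_le_mul_of_nonneg_left (hL2bd k) hC.le)
  -- Claim A : lower semicontinuity tested against compactly supported fields
  have claimA : ∀ φ : EuclideanSpace ℝ (Fin 3) → EuclideanSpace ℝ (Fin 3),
      Continuous φ → HasCompactSupport φ →
      2 * ∫ x, Real.sqrt (b₀ x) * (inner ℝ (H₀ x) (φ x) : ℝ) ∂μ₀ - ∫ x, ‖φ x‖^2 ∂μ₀ ≤
        liminf (fun k => ∫ x, b k x * ‖H k x‖ ^ 2 ∂(μ k)) atTop := by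
    intro φ hφc hφcs
    -- a bound for φ
    obtain ⟨M, hM0, hM⟩ : ∃ M : ℝ, 0 ≤ M ∧ ∀ y, ‖φ y‖ ≤ M := by
      obtain ⟨x₀, hx₀⟩ :=
        (hφc.norm).exists_forall_ge_of_hasCompactSupport (hφcs.norm)
      exact ⟨‖φ x₀‖, norm_nonneg _, hx₀⟩
    -- ‖φ‖² data
    have hn2c : Continuous (fun x : E3 => ‖φ x‖^2) := (hφc.norm).pow 2
    have hn2cs : HasCompactSupport (fun x : E3 => ‖φ x‖^2) :=
      hφcs.comp_left (g := fun v : E3 => ‖v‖^2) (by simp)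
    have hφiν : ∀ (ν : Measure E3) [IsFiniteMeasure ν],
        Integrable (fun x => ‖φ x‖^2) ν := fun ν _ =>
      hn2c.integrable_of_hasCompactSupport hn2cs
    refine le_of_forall_pos_le_add fun ε hε => ?_
    set D := ∫ x, ‖H₀ x‖^2 ∂μ₀ with hDdef
    have hD0 : 0 ≤ D := integral_nonneg fun x => by positivity
    obtain ⟨t, ht, ht2⟩ : ∃ t : ℝ, 0 < t ∧ (1 / t) * C₀ + (1 / t) * D ≤ ε / 2 := by
      refine ⟨2 * (C₀ + D) / ε + 1, ?_, ?_⟩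
      · have h1 : (0:ℝ) ≤ 2 * (C₀ + D) / ε := div_nonneg (by linarith) hε.le
        linarith
      · have ht : (0:ℝ) < 2 * (C₀ + D) / ε + 1 := by
          have h1 : (0:ℝ) ≤ 2 * (C₀ + D) / ε := div_nonneg (by linarith) hε.le
          linarith
        rw [← mul_add, div_mul_eq_mul_div, one_mul, div_le_iff₀ ht]
        have hεne : ε ≠ 0 := hε.ne'
        have he : ε / 2 * (2 * (C₀ + D) / ε + 1) = (C₀ + D) + ε / 2 := by
          field_simp
        linarith
    -- choose a bounded continuous approximation χ of √b₀
    obtain ⟨δ, hδ, hδsmall⟩ : ∃ δ : ℝ, 0 < δ ∧ 2 * (t * (M^2 * δ)) ≤ ε / 2 := by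
      refine ⟨ε / (4 * t * (M^2 + 1)), ?_, ?_⟩
      · have h4t : (0:ℝ) < 4 * t * (M^2 + 1) := by nlinarith [sq_nonneg M]
        exact div_pos hε h4t
      · have hM1 : (0:ℝ) < M^2 + 1 := by nlinarith [sq_nonneg M]
        have hq : M^2 / (M^2 + 1) ≤ 1 := by
          rw [div_le_one hM1]; linarith
        have htne : t ≠ 0 := ht.ne'
        have hM1ne : (M^2 + 1) ≠ 0 := hM1.ne'
        have e : 2 * (t * (M^2 * (ε / (4 * t * (M^2 + 1))))) =
            (ε / 2) * (M^2 / (M^2 + 1)) := by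
          field_simp; ring
        calc 2 * (t * (M^2 * (ε / (4 * t * (M^2 + 1)))))
            = (ε / 2) * (M^2 / (M^2 + 1)) := e
          _ ≤ (ε / 2) * 1 := mul_le_mul_of_nonneg_left hq (by linarith)
          _ = ε / 2 := mul_one _
    have h2e : ENNReal.ofReal (2:ℝ) = 2 := by norm_num
    have hsqmem : MemLp (fun x => Real.sqrt (b₀ x)) (ENNReal.ofReal (2:ℝ)) μ₀ := by
      rw [h2e]
      refine MemLp.of_bound (hmeasb₀.sqrt.aestronglyMeasurable) (Real.sqrt C)
        (ae_of_all _ fun x => ?_)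
      rw [Real.norm_eq_abs, abs_of_nonneg (Real.sqrt_nonneg _)]
      exact Real.sqrt_le_sqrt (hb₀ x).2
    obtain ⟨χ, hχint, hχmem⟩ :=
      hsqmem.exists_boundedContinuous_integral_rpow_sub_le two_pos hδ
    have hχ2 : ∫ x, (Real.sqrt (b₀ x) - χ x)^2 ∂μ₀ ≤ δ := by
      refine le_trans (le_of_eq (integral_congr_ae (ae_of_all _ fun x => ?_))) hχint
      rw [show ((2:ℝ)) = ((2:ℕ):ℝ) by norm_num, Real.rpow_natCast, Real.norm_eq_abs,
        sq_abs]
    have hMχ : ∀ x, |χ x| ≤ ‖χ‖ := fun x => by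
      simpa [Real.norm_eq_abs] using χ.norm_coe_le_norm x
    -- the cut-off ζ
    set sa := Real.sqrt c with hsa
    set sb := Real.sqrt C with hsb
    set ζ : ℝ → ℝ := fun s => max 0 (min 1 (min (s - (sa - 1)) (sb + 1 - s))) with hζ
    have hζcont : Continuous ζ := by
      apply continuous_const.max
      apply continuous_const.min
      exact ((continuous_id.sub continuous_const).min (continuous_const.sub continuous_id))
    have hζ1 : ∀ s, sa ≤ s → s ≤ sb → ζ s = 1 := by
      intro s h1 h2
      have e1 : (1:ℝ) ≤ min (s - (sa - 1)) (sb + 1 - s) := le_min (by linarith) (by linarith)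
      rw [hζ]; simp only
      rw [min_eq_left e1, max_eq_right zero_le_one]
    have hζ0 : ∀ s, s ∉ Set.Icc (sa - 1) (sb + 1) → ζ s = 0 := by
      intro s hs
      rw [Set.mem_Icc, not_and_or] at hs
      have hle : min 1 (min (s - (sa - 1)) (sb + 1 - s)) ≤ 0 := by
        rcases hs with h | h
        · push_neg at h
          exact le_trans (min_le_of_right_le (min_le_left _ _)) (by linarith)
        · push_neg at h
          exact le_trans (min_le_of_right_le (min_le_right _ _)) (by linarith)
      rw [hζ]; simp only
      exact max_eq_left hle
    -- the C_c test objects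
    have hΨc : Continuous (fun q : E3 × ℝ =>
        ζ q.2 * ((q.2 - χ q.1)^2 * ‖φ q.1‖^2)) := by
      refine (hζcont.comp continuous_snd).mul (Continuous.mul ?_ ?_)
      · exact (continuous_snd.sub (χ.continuous.comp continuous_fst)).pow 2
      · exact ((hφc.comp continuous_fst).norm).pow 2
    have hΨcs : HasCompactSupport (fun q : E3 × ℝ =>
        ζ q.2 * ((q.2 - χ q.1)^2 * ‖φ q.1‖^2)) := by
      refine HasCompactSupport.intro (K := tsupport φ ×ˢ Set.Icc (sa - 1) (sb + 1))
        (hφcs.prod isCompact_Icc) fun q hq => ?_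
      rw [Set.mem_prod, not_and_or] at hq
      rcases hq with h | h
      · rw [image_eq_zero_of_notMem_tsupport h]
        simp
      · rw [hζ0 _ h, zero_mul]
    set Ψ : C_c(E3 × ℝ, ℝ) :=
      ⟨⟨fun q => ζ q.2 * ((q.2 - χ q.1)^2 * ‖φ q.1‖^2), hΨc⟩, hΨcs⟩ with hΨdef
    set φn2 : C_c(E3, ℝ) := ⟨⟨fun x => ‖φ x‖^2, hn2c⟩, hn2cs⟩ with hφn2
    have hsmulc : Continuous (fun x : E3 => χ x • φ x) := (χ.continuous.smul hφc)
    have hsmulcs : HasCompactSupport (fun x : E3 => χ x • φ x) := by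
      refine HasCompactSupport.intro hφcs fun x hx => ?_
      rw [image_eq_zero_of_notMem_tsupport hx, smul_zero]
    set χφ : C_c(E3, E3) := ⟨⟨fun x => χ x • φ x, hsmulc⟩, hsmulcs⟩ with hχφ
    -- the three limit statements
    have hPlim : Tendsto (fun k => ∫ x, ‖φ x‖^2 ∂(μ k)) atTop
        (nhds (∫ x, ‖φ x‖^2 ∂μ₀)) := hμconv φn2
    have hAlim0 := hHconv χφ
    have hinner : ∀ (h' : E3 → E3) (x : E3),
        (inner ℝ (h' x) (χ x • φ x) : ℝ) = χ x * (inner ℝ (h' x) (φ x) : ℝ) :=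
      fun h' x => real_inner_smul_right _ _ _
    have hAlim : Tendsto (fun k => ∫ x, χ x * (inner ℝ (H k x) (φ x) : ℝ) ∂(μ k)) atTop
        (nhds (∫ x, χ x * (inner ℝ (H₀ x) (φ x) : ℝ) ∂μ₀)) := by
      have e : ∀ (ν : Measure E3) (h' : E3 → E3),
          ∫ x, (inner ℝ (h' x) (χφ x) : ℝ) ∂ν = ∫ x, χ x * (inner ℝ (h' x) (φ x) : ℝ) ∂ν := by
        intro ν h'
        exact integral_congr_ae (ae_of_all _ fun x => hinner h' x)
      simpa only [e] using hAlim0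
    have hζeq : ∀ (β : E3 → ℝ), (∀ x, c ≤ β x ∧ β x ≤ C) → ∀ x : E3,
        Ψ (x, Real.sqrt (β x)) = (Real.sqrt (β x) - χ x)^2 * ‖φ x‖^2 := by
      intro β hβ x
      have h1 : sa ≤ Real.sqrt (β x) := Real.sqrt_le_sqrt (hβ x).1
      have h2 : Real.sqrt (β x) ≤ sb := Real.sqrt_le_sqrt (hβ x).2
      show ζ _ * _ = _
      rw [hζ1 _ h1 h2, one_mul]
    have hGlim : Tendsto
        (fun k => ∫ x, (Real.sqrt (b k x) - χ x)^2 * ‖φ x‖^2 ∂(μ k)) atTop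
        (nhds (∫ x, (Real.sqrt (b₀ x) - χ x)^2 * ‖φ x‖^2 ∂μ₀)) := by
      have h0 := hbconv Ψ
      have e1 : ∀ k, ∫ x, Ψ (x, Real.sqrt (b k x)) ∂(μ k) =
          ∫ x, (Real.sqrt (b k x) - χ x)^2 * ‖φ x‖^2 ∂(μ k) := fun k =>
        integral_congr_ae (ae_of_all _ fun x => hζeq (b k) (hb k) x)
      have e0 : ∫ x, Ψ (x, Real.sqrt (b₀ x)) ∂μ₀ =
          ∫ x, (Real.sqrt (b₀ x) - χ x)^2 * ‖φ x‖^2 ∂μ₀ :=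
        integral_congr_ae (ae_of_all _ fun x => hζeq b₀ hb₀ x)
      rw [e0] at h0
      simpa only [e1] using h0
    -- the per-k inequality
    have key : ∀ k, 2 * (∫ x, χ x * (inner ℝ (H k x) (φ x) : ℝ) ∂(μ k))
        - t * (∫ x, (Real.sqrt (b k x) - χ x)^2 * ‖φ x‖^2 ∂(μ k))
        - (1/t) * C₀ - ∫ x, ‖φ x‖^2 ∂(μ k) ≤ ∫ x, b k x * ‖H k x‖ ^ 2 ∂(μ k) := by
      intro k
      have hA := energy_lower (hmeasb k) hc (hb k) (hmeasH k) (hH2 k) hφc hM (hφiν _)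
      have hB := inner_shift (hmeasb k) hc (hb k) (hmeasH k) (hH2 k) hφc hM (hφiν _)
        χ.continuous hMχ ht
      have hBa := (abs_le.1 hB).1
      have hHb : (1/t) * ∫ x, ‖H k x‖^2 ∂(μ k) ≤ (1/t) * C₀ :=
        mul_le_mul_of_nonneg_left (hL2bd k) (one_div_nonneg.2 ht.le)
      linarith
    -- pass to the liminf
    have hwlim : Tendsto (fun k =>
        2 * (∫ x, χ x * (inner ℝ (H k x) (φ x) : ℝ) ∂(μ k))
        - t * (∫ x, (Real.sqrt (b k x) - χ x)^2 * ‖φ x‖^2 ∂(μ k))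
        - (1/t) * C₀ - ∫ x, ‖φ x‖^2 ∂(μ k)) atTop
        (nhds (2 * (∫ x, χ x * (inner ℝ (H₀ x) (φ x) : ℝ) ∂μ₀)
        - t * (∫ x, (Real.sqrt (b₀ x) - χ x)^2 * ‖φ x‖^2 ∂μ₀)
        - (1/t) * C₀ - ∫ x, ‖φ x‖^2 ∂μ₀)) := by
      exact (((hAlim.const_mul 2).sub (hGlim.const_mul t)).sub tendsto_const_nhds).sub hPlim
    have hliminf : 2 * (∫ x, χ x * (inner ℝ (H₀ x) (φ x) : ℝ) ∂μ₀)
        - t * (∫ x, (Real.sqrt (b₀ x) - χ x)^2 * ‖φ x‖^2 ∂μ₀)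
        - (1/t) * C₀ - ∫ x, ‖φ x‖^2 ∂μ₀ ≤
        liminf (fun k => ∫ x, b k x * ‖H k x‖ ^ 2 ∂(μ k)) atTop := by
      rw [← hwlim.liminf_eq]
      exact liminf_le_liminf (Eventually.of_forall key) hwlim.isBoundedUnder_ge
        (isCoboundedUnder_ge_of_le _ hub)
    -- limit-side comparison
    have hB0 := inner_shift hmeasb₀ hc hb₀ hmeasH₀ hH₀2 hφc hM (hφiν μ₀)
      χ.continuous hMχ ht
    have hB0a := (abs_le.1 hB0).2
    rw [← hDdef] at hB0a
    -- bound on the limit weighted distance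
    have hdiffbd : ∀ x, |Real.sqrt (b₀ x) - χ x| ≤ Real.sqrt C + ‖χ‖ := fun x => by
      refine (abs_sub _ _).trans (add_le_add ?_ (hMχ x))
      rw [abs_of_nonneg (Real.sqrt_nonneg _)]
      exact Real.sqrt_le_sqrt (hb₀ x).2
    have hsqint : Integrable (fun x => (Real.sqrt (b₀ x) - χ x)^2) μ₀ := by
      refine (integrable_const ((Real.sqrt C + ‖χ‖)^2)).mono'
        ((hmeasb₀.sqrt.sub χ.continuous.measurable).pow_const 2).aestronglyMeasurable
        (ae_of_all _ fun x => ?_)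
      rw [Real.norm_eq_abs, abs_of_nonneg (sq_nonneg _)]
      have := abs_le.1 (hdiffbd x)
      nlinarith [abs_nonneg (Real.sqrt (b₀ x) - χ x), Real.sqrt_nonneg C, norm_nonneg χ]
    have hGint₀ : Integrable (fun x => (Real.sqrt (b₀ x) - χ x)^2 * ‖φ x‖^2) μ₀ :=
      integrable_wsq (hmeasb₀.sqrt.sub χ.continuous.measurable) hdiffbd hφc (hφiν μ₀)
    have hGbound : ∫ x, (Real.sqrt (b₀ x) - χ x)^2 * ‖φ x‖^2 ∂μ₀ ≤ M^2 * δ := by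
      have h1 : ∫ x, (Real.sqrt (b₀ x) - χ x)^2 * ‖φ x‖^2 ∂μ₀ ≤
          ∫ x, M^2 * (Real.sqrt (b₀ x) - χ x)^2 ∂μ₀ := by
        refine integral_mono hGint₀ (hsqint.const_mul _) fun x => ?_
        have hφM : ‖φ x‖^2 ≤ M^2 := by nlinarith [hM x, norm_nonneg (φ x)]
        nlinarith [sq_nonneg (Real.sqrt (b₀ x) - χ x)]
      rw [integral_const_mul] at h1
      exact h1.trans (mul_le_mul_of_nonneg_left hχ2 (sq_nonneg M))
    have hGnn : 0 ≤ ∫ x, (Real.sqrt (b₀ x) - χ x)^2 * ‖φ x‖^2 ∂μ₀ :=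
      integral_nonneg fun x => by positivity
    have htG : t * (∫ x, (Real.sqrt (b₀ x) - χ x)^2 * ‖φ x‖^2 ∂μ₀) ≤ t * (M^2 * δ) :=
      mul_le_mul_of_nonneg_left hGbound ht.le
    have s1 : 2 * ∫ x, Real.sqrt (b₀ x) * (inner ℝ (H₀ x) (φ x) : ℝ) ∂μ₀
        - ∫ x, ‖φ x‖^2 ∂μ₀ ≤
        liminf (fun k => ∫ x, b k x * ‖H k x‖ ^ 2 ∂(μ k)) atTop
          + 2 * (t * ∫ x, (Real.sqrt (b₀ x) - χ x)^2 * ‖φ x‖^2 ∂μ₀)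
          + ((1/t) * C₀ + (1/t) * D) := by linarith [hliminf, hB0a]
    have s2 : 2 * (t * ∫ x, (Real.sqrt (b₀ x) - χ x)^2 * ‖φ x‖^2 ∂μ₀) ≤ ε / 2 := by
      linarith [htG, hδsmall]
    linarith [s1, s2, ht2]
  -- Final approximation step
  have h2e : ENNReal.ofReal (2:ℝ) = 2 := by norm_num
  set F : EuclideanSpace ℝ (Fin 3) → EuclideanSpace ℝ (Fin 3) :=
    fun x => Real.sqrt (b₀ x) • H₀ x with hFdef
  have hFmeas : Measurable F := (hmeasb₀.sqrt).smul hmeasH₀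
  have hF2 : MemLp F 2 μ₀ := by
    refine MemLp.of_le_mul hH₀2 hFmeas.aestronglyMeasurable (c := Real.sqrt C)
      (ae_of_all _ fun x => ?_)
    rw [hFdef]
    simp only [norm_smul, Real.norm_eq_abs, abs_of_nonneg (Real.sqrt_nonneg _)]
    exact mul_le_mul_of_nonneg_right (Real.sqrt_le_sqrt (hb₀ x).2) (norm_nonneg _)
  have hF2' : MemLp F (ENNReal.ofReal (2:ℝ)) μ₀ := by rw [h2e]; exact hF2
  refine le_of_forall_pos_le_add fun ε hε => ?_
  obtain ⟨g, hgcs, hgapp, hgc, hgmem⟩ :=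
    hF2'.exists_hasCompactSupport_integral_rpow_sub_le two_pos hε
  rw [h2e] at hgmem
  have happ : ∫ x, ‖F x - g x‖^2 ∂μ₀ ≤ ε := by
    refine le_trans (le_of_eq (integral_congr_ae (ae_of_all _ fun x => ?_))) hgapp
    rw [show ((2:ℝ)) = ((2:ℕ):ℝ) by norm_num, Real.rpow_natCast]
  have hA := claimA g hgc hgcs
  -- bound of g
  obtain ⟨y₀, hMg⟩ := (hgc.norm).exists_forall_ge_of_hasCompactSupport (hgcs.norm)
  -- integrabilities
  have hgi : Integrable (fun x => ‖g x‖^2) μ₀ :=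
    (show Continuous (fun x => ‖g x‖^2) from (hgc.norm).pow 2).integrable_of_hasCompactSupport
      (hgcs.comp_left (g := fun v : E3 => ‖v‖^2) (by simp))
  have hint1 : Integrable (fun x => Real.sqrt (b₀ x) * (inner ℝ (H₀ x) (g x) : ℝ)) μ₀ := by
    refine integrable_mul_inner hmeasH₀ hH₀2 hmeasb₀.sqrt
      (Mm := Real.sqrt C) (fun x => ?_) hgc hMg
    rw [abs_of_nonneg (Real.sqrt_nonneg _)]
    exact Real.sqrt_le_sqrt (hb₀ x).2
  have hint0 : Integrable (fun x => b₀ x * ‖H₀ x‖^2) μ₀ :=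
    integrable_weight_normsq hmeasb₀ habsb₀ hmeasH₀ hH₀2
  have hintFg : Integrable (fun x => ‖F x - g x‖^2) μ₀ :=
    integrable_normsq (hF2.sub hgmem)
  -- expansion identity
  have e : ∀ x, ‖F x - g x‖^2 = b₀ x * ‖H₀ x‖^2
      - 2 * (Real.sqrt (b₀ x) * (inner ℝ (H₀ x) (g x) : ℝ)) + ‖g x‖^2 := by
    intro x
    simp only [hFdef]
    have h1 : ‖Real.sqrt (b₀ x) • H₀ x - g x‖^2 = ‖Real.sqrt (b₀ x) • H₀ x‖^2
        - 2 * (inner ℝ (Real.sqrt (b₀ x) • H₀ x) (g x) : ℝ) + ‖g x‖^2 :=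
      norm_sub_sq_real _ _
    have h2 : ‖Real.sqrt (b₀ x) • H₀ x‖^2 = b₀ x * ‖H₀ x‖^2 := by
      rw [norm_smul, Real.norm_eq_abs, abs_of_nonneg (Real.sqrt_nonneg _), mul_pow,
        Real.sq_sqrt (le_trans hc.le (hb₀ x).1)]
    have h3 : (inner ℝ (Real.sqrt (b₀ x) • H₀ x) (g x) : ℝ) =
        Real.sqrt (b₀ x) * (inner ℝ (H₀ x) (g x) : ℝ) := real_inner_smul_left _ _ _
    rw [h1, h2, h3]
  have hi : ∫ x, ‖F x - g x‖^2 ∂μ₀ =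
      ∫ x, b₀ x * ‖H₀ x‖^2 ∂μ₀
        - 2 * ∫ x, Real.sqrt (b₀ x) * (inner ℝ (H₀ x) (g x) : ℝ) ∂μ₀
        + ∫ x, ‖g x‖^2 ∂μ₀ := by
    calc ∫ x, ‖F x - g x‖^2 ∂μ₀
        = ∫ x, (b₀ x * ‖H₀ x‖^2
            - 2 * (Real.sqrt (b₀ x) * (inner ℝ (H₀ x) (g x) : ℝ)) + ‖g x‖^2) ∂μ₀ :=
          integral_congr_ae (ae_of_all _ e)
      _ = ∫ x, b₀ x * ‖H₀ x‖^2 ∂μ₀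
            - 2 * ∫ x, Real.sqrt (b₀ x) * (inner ℝ (H₀ x) (g x) : ℝ) ∂μ₀
            + ∫ x, ‖g x‖^2 ∂μ₀ := by
          have hsub : Integrable (fun x => b₀ x * ‖H₀ x‖^2
              - 2 * (Real.sqrt (b₀ x) * (inner ℝ (H₀ x) (g x) : ℝ))) μ₀ := by
            exact hint0.sub (hint1.const_mul 2)
          rw [integral_add hsub hgi, integral_sub hint0 (hint1.const_mul 2),
            integral_const_mul]
  linarith [hA, happ, hi]
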